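/- arXiv:2603.00023 — 2 statements merged into one kernel-verified Lean document; each statement's English description precedes it below -/
import Mathlib

section
/- Let u be uniformly distributed on the unit sphere in ℝ^d (d ≥ 2) and let v ∈ ℝ^d be a nonzero vector. Then E[sign(⟨v,u⟩) u] = ν · v/‖v‖ where ν = E[|u₁|] is the expected absolute value of the first coordinate of u. -/
open MeasureTheory RealInnerProductSpace

lemma real_measurable_sign : Measurable Real.sign := by
  unfold Real.sign
  exact Measurable.ite (measurableSet_lt measurable_id measurable_const) measurable_const
    (Measurable.ite (measurableSet_lt measurable_const measurable_id) measurable_const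
      measurable_const)

lemma real_sign_abs_le (x : ℝ) : |Real.sign x| ≤ 1 := by
  rcases Real.sign_apply_eq x with h | h | h <;> rw [h] <;> norm_num

lemma real_sign_mul_self (x : ℝ) : Real.sign x * x = |x| := by
  rcases lt_trichotomy x 0 with h | h | h
  · rw [Real.sign_of_neg h, abs_of_neg h]; ring
  · simp [h]
  · rw [Real.sign_of_pos h, abs_of_pos h]; ring

lemma real_sign_mul_pos {c : ℝ} (hc : 0 < c) (x : ℝ) :
    Real.sign (c * x) = Real.sign x := by
  rcases lt_trichotomy x 0 with h | h | h
  · rw [Real.sign_of_neg h, Real.sign_of_neg (mul_neg_of_pos_of_neg hc h)]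
  · simp [h]
  · rw [Real.sign_of_pos h, Real.sign_of_pos (mul_pos hc h)]

noncomputable def flipLM (d : ℕ) (j : Fin d) :
    EuclideanSpace ℝ (Fin d) →ₗ[ℝ] EuclideanSpace ℝ (Fin d) :=
  LinearMap.id - (2 : ℝ) •
    ((LinearMap.toSpanSingleton ℝ _ (EuclideanSpace.single j (1:ℝ))).comp
      (EuclideanSpace.projₗ j))

lemma flipLM_apply (d : ℕ) (j : Fin d) (u : EuclideanSpace ℝ (Fin d)) (k : Fin d) :
    flipLM d j u k = if k = j then -u k else u k := by
  simp only [flipLM, LinearMap.sub_apply, LinearMap.id_apply, LinearMap.smul_apply,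
    LinearMap.comp_apply, LinearMap.toSpanSingleton_apply, PiLp.projₗ_apply,
    PiLp.sub_apply, PiLp.smul_apply, EuclideanSpace.single_apply, smul_eq_mul]
  by_cases h : k = j
  · subst h; simp; ring
  · simp [h, Ne.symm h]

noncomputable def flipLIE (d : ℕ) (j : Fin d) :
    EuclideanSpace ℝ (Fin d) ≃ₗᵢ[ℝ] EuclideanSpace ℝ (Fin d) :=
  LinearEquiv.isometryOfInner
    (LinearEquiv.ofLinear (flipLM d j) (flipLM d j)
      (by ext u k; simp [flipLM_apply]; by_cases h : k = j <;> simp [h])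
      (by ext u k; simp [flipLM_apply]; by_cases h : k = j <;> simp [h]))
    (by
      intro x y
      simp only [LinearEquiv.ofLinear_apply]
      rw [PiLp.inner_apply, PiLp.inner_apply]
      refine Finset.sum_congr rfl fun k _ => ?_
      simp only [flipLM_apply, RCLike.inner_apply, conj_trivial]
      by_cases h : k = j <;> simp [h])

lemma flipLIE_apply (d : ℕ) (j : Fin d) (u : EuclideanSpace ℝ (Fin d)) (k : Fin d) :
    flipLIE d j u k = if k = j then -u k else u k := flipLM_apply d j u k

theorem stmt4 (d : ℕ) (hd : 2 ≤ d)
    (μ : Measure (EuclideanSpace ℝ (Fin d))) [IsProbabilityMeasure μ]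
    (hsphere : ∀ᵐ u ∂μ, ‖u‖ = 1)
    (hrot : ∀ R : EuclideanSpace ℝ (Fin d) ≃ₗᵢ[ℝ] EuclideanSpace ℝ (Fin d),
      Measure.map (⇑R) μ = μ)
    (v : EuclideanSpace ℝ (Fin d)) (hv : v ≠ 0) :
    ∫ u, Real.sign ⟪v, u⟫ • u ∂μ
      = (∫ u, |u ⟨0, by omega⟩| ∂μ) • (‖v‖⁻¹ • v) := by
  have hdpos : 0 < d := by omega
  set i0 : Fin d := ⟨0, hdpos⟩ with hi0
  set e : EuclideanSpace ℝ (Fin d) := EuclideanSpace.single i0 (1:ℝ) with he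
  set ν : ℝ := ∫ u, |u i0| ∂μ with hν
  -- coordinate bound
  have habs : ∀ (u : EuclideanSpace ℝ (Fin d)) (k : Fin d), |u k| ≤ ‖u‖ := by
    intro u k
    have := abs_real_inner_le_norm (EuclideanSpace.single k (1:ℝ)) u
    simpa [EuclideanSpace.inner_single_left, EuclideanSpace.norm_single] using this
  -- measurability of coordinate functions
  have hmeasc : ∀ k : Fin d, Measurable fun u : EuclideanSpace ℝ (Fin d) => u k :=
    fun k => (EuclideanSpace.proj k).continuous.measurable
  -- integrability of the scalar coordinate integrands
  have hintc : ∀ j : Fin d,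
      Integrable (fun u : EuclideanSpace ℝ (Fin d) => Real.sign (u i0) * u j) μ := by
    intro j
    refine Integrable.mono' (integrable_const 1)
      ((real_measurable_sign.comp (hmeasc i0)).mul (hmeasc j)).aestronglyMeasurable ?_
    filter_upwards [hsphere] with u hu
    have h1 : |Real.sign (u i0) * u j| ≤ |u j| := by
      rw [abs_mul]
      calc |Real.sign (u i0)| * |u j| ≤ 1 * |u j| :=
        mul_le_mul_of_nonneg_right (real_sign_abs_le _) (abs_nonneg _)
      _ = |u j| := one_mul _
    calc ‖Real.sign (u i0) * u j‖ = |Real.sign (u i0) * u j| := rfl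
    _ ≤ |u j| := h1
    _ ≤ ‖u‖ := habs u j
    _ = 1 := hu
  -- integrability of the vector integrands
  have hintv : ∀ w : EuclideanSpace ℝ (Fin d),
      Integrable (fun u : EuclideanSpace ℝ (Fin d) => Real.sign ⟪w, u⟫ • u) μ := by
    intro w
    have hm : Measurable fun u : EuclideanSpace ℝ (Fin d) => Real.sign ⟪w, u⟫ • u := by
      have h1 : Measurable fun u : EuclideanSpace ℝ (Fin d) => ⟪w, u⟫ :=
        (continuous_const.inner continuous_id).measurable
      exact (real_measurable_sign.comp h1).smul measurable_id
    refine Integrable.mono' (integrable_const 1) hm.aestronglyMeasurable ?_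
    filter_upwards [hsphere] with u hu
    rw [norm_smul]
    calc ‖Real.sign ⟪w, u⟫‖ * ‖u‖ ≤ 1 * ‖u‖ :=
      mul_le_mul_of_nonneg_right (real_sign_abs_le _) (norm_nonneg _)
    _ = 1 := by rw [one_mul, hu]
  -- off-axis coordinates vanish
  have hzero : ∀ j : Fin d, j ≠ i0 →
      (∫ u, Real.sign (u i0) * u j ∂μ) = 0 := by
    intro j hj
    set T := flipLIE d j with hT
    have hmap := hrot T
    have h1 : (∫ u, Real.sign (u i0) * u j ∂μ)
        = ∫ u, Real.sign (T u i0) * (T u j) ∂μ := by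
      conv_lhs => rw [← hmap]
      rw [integral_map T.continuous.measurable.aemeasurable]
      rw [hmap]
      exact ((real_measurable_sign.comp (hmeasc i0)).mul (hmeasc j)).aestronglyMeasurable
    have h2 : ∀ u : EuclideanSpace ℝ (Fin d),
        Real.sign (T u i0) * (T u j) = -(Real.sign (u i0) * u j) := by
      intro u
      rw [hT, flipLIE_apply, flipLIE_apply, if_neg (Ne.symm hj), if_pos rfl]
      ring
    have h3 : (∫ u, Real.sign (u i0) * u j ∂μ)
        = -∫ u, Real.sign (u i0) * u j ∂μ := by
      conv_lhs => rw [h1]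
      simp_rw [h2]
      exact integral_neg fun u : EuclideanSpace ℝ (Fin d) => Real.sign (u i0) * u j
    linarith
  -- inner with e is the first coordinate
  have hee : ∀ u : EuclideanSpace ℝ (Fin d), ⟪e, u⟫ = u i0 := by
    intro u; simp [he, EuclideanSpace.inner_single_left]
  have hint0 : Integrable (fun u : EuclideanSpace ℝ (Fin d) => Real.sign (u i0) • u) μ := by
    have h := hintv e; simp_rw [hee] at h; exact h
  have hcoord0 : (∫ u, Real.sign (u i0) * u i0 ∂μ) = ν := by
    rw [hν]
    exact integral_congr_ae (Filter.Eventually.of_forall fun u => real_sign_mul_self _)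
  -- the e-case
  have hvec : (∫ u, Real.sign (u i0) • u ∂μ) = ν • e := by
    refine PiLp.ext fun j => ?_
    have hL := ContinuousLinearMap.integral_comp_comm (EuclideanSpace.proj j (𝕜 := ℝ)) hint0
    have hL' : (∫ u, Real.sign (u i0) * u j ∂μ) = (∫ u, Real.sign (u i0) • u ∂μ) j := by
      simpa [smul_eq_mul] using hL
    have hrhs : (ν • e) j = if j = i0 then ν else 0 := by
      rw [he]
      by_cases h : j = i0
      · subst h; simp [EuclideanSpace.single_apply]
      · simp [EuclideanSpace.single_apply, Ne.symm h, h]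
    rw [← hL', hrhs]
    by_cases h : j = i0
    · subst h; simpa using hcoord0
    · simp [hzero j h, h]
  -- the general case via a reflection mapping e to w := ‖v‖⁻¹ • v
  set w : EuclideanSpace ℝ (Fin d) := ‖v‖⁻¹ • v with hw
  have hnw : ‖w‖ = 1 := norm_smul_inv_norm hv
  have hne1 : ‖e‖ = 1 := by simp [he]
  set R := Submodule.reflection (ℝ ∙ (e - w))ᗮ with hR
  have hRe : R e = w := Submodule.reflection_sub (by rw [hne1, hnw])
  have hvpos : (0:ℝ) < ‖v‖ := norm_pos_iff.mpr hv
  have hvw : v = ‖v‖ • w := (smul_inv_smul₀ (ne_of_gt hvpos) v).symm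
  have step1 : (∫ u, Real.sign ⟪v, u⟫ • u ∂μ)
      = ∫ u, Real.sign ⟪v, R u⟫ • R u ∂μ := by
    conv_lhs => rw [← hrot R]
    rw [integral_map (R.continuous.measurable.aemeasurable)]
    rw [hrot R]
    exact (hintv v).aestronglyMeasurable
  have step2 : ∀ u : EuclideanSpace ℝ (Fin d),
      Real.sign ⟪v, R u⟫ • R u = R (Real.sign (u i0) • u) := by
    intro u
    have h1 : ⟪v, R u⟫ = ‖v‖ * u i0 := by
      conv_lhs => rw [hvw]
      rw [real_inner_smul_left, ← hRe, R.inner_map_map, hee]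
    rw [h1, real_sign_mul_pos hvpos, _root_.map_smul]
  rw [step1]
  simp_rw [step2]
  have hcomm := R.toLinearIsometry.integral_comp_comm (μ := μ)
    (fun u : EuclideanSpace ℝ (Fin d) => Real.sign (u i0) • u)
  simp only [LinearIsometryEquiv.coe_toLinearIsometry] at hcomm
  rw [hcomm, hvec, _root_.map_smul, hRe]
end

section
/- Let f : ℝ^d → ℝ be differentiable with L-Lipschitz gradient, x ∈ ℝ^d, u a unit vector, and ν > 0. If |⟨u, ∇f(x)⟩| > Lν/2, then sign(f(x + νu) - f(x - νu)) = sign(⟨u, ∇f(x)⟩). -/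
open RealInnerProductSpace

section aux

variable {d : ℕ}

lemma descent_key (f : EuclideanSpace ℝ (Fin d) → ℝ)
    (g : EuclideanSpace ℝ (Fin d) → EuclideanSpace ℝ (Fin d)) (L : ℝ) (hL0 : 0 ≤ L)
    (hg : ∀ y, HasGradientAt f (g y) y)
    (hLip : ∀ y z, ‖g y - g z‖ ≤ L * ‖y - z‖)
    (z v : EuclideanSpace ℝ (Fin d)) :
    |f (z + v) - f z - ⟪g z, v⟫| ≤ L / 2 * ‖v‖ ^ 2 := by
  have hgc : Continuous g := by
    have : LipschitzWith L.toNNReal g := by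
      apply LipschitzWith.of_dist_le_mul
      intro a b
      rw [dist_eq_norm, dist_eq_norm]
      calc ‖g a - g b‖ ≤ L * ‖a - b‖ := hLip a b
        _ ≤ (L.toNNReal : ℝ) * ‖a - b‖ :=
          mul_le_mul_of_nonneg_right (Real.le_coe_toNNReal L) (norm_nonneg _)
    exact this.continuous
  set φ : ℝ → ℝ := fun t => f (z + t • v) with hφ
  have hline : ∀ t : ℝ, HasDerivAt (fun s : ℝ => z + s • v) v t := fun t => by
    simpa using ((hasDerivAt_id t).smul_const v).const_add z
  have hderiv : ∀ t : ℝ, HasDerivAt φ ⟪g (z + t • v), v⟫ t := by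
    intro t
    have hF := (hg (z + t • v)).hasFDerivAt
    have := hF.comp_hasDerivAt t (hline t)
    exact this
  have hcont : Continuous fun t : ℝ => ⟪g (z + t • v), v⟫ := by
    exact (hgc.comp (by continuity)).inner continuous_const
  have hFTC : φ 1 - φ 0 = ∫ t in (0:ℝ)..1, ⟪g (z + t • v), v⟫ := by
    rw [intervalIntegral.integral_eq_sub_of_hasDerivAt (fun t _ => hderiv t)
      (hcont.intervalIntegrable 0 1)]
  have hval : f (z + v) - f z - ⟪g z, v⟫
      = ∫ t in (0:ℝ)..1, (⟪g (z + t • v), v⟫ - ⟪g z, v⟫) := by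
    rw [intervalIntegral.integral_sub (hcont.intervalIntegrable 0 1)
      (intervalIntegrable_const), intervalIntegral.integral_const]
    have h0 : φ 0 = f z := by simp [hφ]
    have h1 : φ 1 = f (z + v) := by simp [hφ]
    rw [← hFTC, h0, h1]
    simp only [sub_zero, one_smul]
  rw [hval]
  have hbound : ∀ t ∈ Set.Icc (0:ℝ) 1,
      |⟪g (z + t • v), v⟫ - ⟪g z, v⟫| ≤ (L * ‖v‖ ^ 2) * t := by
    intro t ht
    have : ⟪g (z + t • v), v⟫ - ⟪g z, v⟫ = ⟪g (z + t • v) - g z, v⟫ := by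
      rw [inner_sub_left]
    rw [this]
    calc |⟪g (z + t • v) - g z, v⟫| ≤ ‖g (z + t • v) - g z‖ * ‖v‖ :=
          abs_real_inner_le_norm _ _
      _ ≤ (L * ‖(z + t • v) - z‖) * ‖v‖ := by
          exact mul_le_mul_of_nonneg_right (hLip _ _) (norm_nonneg _)
      _ = (L * ‖v‖ ^ 2) * t := by
          simp only [add_sub_cancel_left, norm_smul, Real.norm_eq_abs,
            abs_of_nonneg ht.1]
          ring
  calc |∫ t in (0:ℝ)..1, (⟪g (z + t • v), v⟫ - ⟪g z, v⟫)|
      ≤ ∫ t in (0:ℝ)..1, |⟪g (z + t • v), v⟫ - ⟪g z, v⟫| :=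
        intervalIntegral.abs_integral_le_integral_abs zero_le_one
    _ ≤ ∫ t in (0:ℝ)..1, (L * ‖v‖ ^ 2) * t := by
        apply intervalIntegral.integral_mono_on zero_le_one
        · exact ((hcont.sub continuous_const).abs.intervalIntegrable 0 1)
        · exact (continuous_const.mul continuous_id).intervalIntegrable 0 1
        · exact hbound
    _ = L / 2 * ‖v‖ ^ 2 := by
        rw [intervalIntegral.integral_const_mul, integral_id]
        ring

end aux

theorem stmt9 (d : ℕ) (f : EuclideanSpace ℝ (Fin d) → ℝ)
    (g : EuclideanSpace ℝ (Fin d) → EuclideanSpace ℝ (Fin d)) (L : ℝ)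
    (hg : ∀ y, HasGradientAt f (g y) y)
    (hLip : ∀ y z, ‖g y - g z‖ ≤ L * ‖y - z‖)
    (x u : EuclideanSpace ℝ (Fin d)) (hu : ‖u‖ = 1) (ν : ℝ) (hν : 0 < ν)
    (hbig : L * ν / 2 < |⟪u, g x⟫|) :
    Real.sign (f (x + ν • u) - f (x - ν • u)) = Real.sign ⟪u, g x⟫ := by
  have hL0 : 0 ≤ L := by
    have h := hLip u 0
    simp [hu] at h
    exact le_trans (norm_nonneg _) h
  set c : ℝ := ⟪u, g x⟫ with hc
  have hcu : ∀ w : EuclideanSpace ℝ (Fin d), ∀ t : ℝ, ⟪g x, t • u⟫ = t * c := by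
    intro w t
    rw [hc, real_inner_comm, real_inner_smul_left]
  have hA := descent_key f g L hL0 hg hLip x (ν • u)
  have hB := descent_key f g L hL0 hg hLip x (-(ν • u))
  rw [hcu x ν] at hA
  have hBin : ⟪g x, -(ν • u)⟫ = -(ν * c) := by
    rw [inner_neg_right, hcu x ν]
  rw [hBin] at hB
  have hnν : ‖ν • u‖ ^ 2 = ν ^ 2 := by
    rw [norm_smul, hu, Real.norm_eq_abs, abs_of_pos hν]; ring
  rw [hnν] at hA
  rw [norm_neg, hnν] at hB
  have hxm : x + -(ν • u) = x - ν • u := by abel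
  rw [hxm] at hB
  -- now combine
  have hAbs := abs_sub_abs_le_abs_sub (f (x + ν • u) - f x - ν * c)
    (f (x - ν • u) - f x - -(ν * c))
  have habsA : |f (x + ν • u) - f x - ν * c| ≤ L / 2 * ν ^ 2 := hA
  have habsB : |f (x - ν • u) - f x - -(ν * c)| ≤ L / 2 * ν ^ 2 := hB
  have key : |f (x + ν • u) - f (x - ν • u) - 2 * ν * c| ≤ L * ν ^ 2 := by
    have : f (x + ν • u) - f (x - ν • u) - 2 * ν * c
        = (f (x + ν • u) - f x - ν * c) - (f (x - ν • u) - f x - -(ν * c)) := by ring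
    rw [this]
    calc |_ - _| ≤ |f (x + ν • u) - f x - ν * c| + |f (x - ν • u) - f x - -(ν * c)| :=
          abs_sub _ _
      _ ≤ L / 2 * ν ^ 2 + L / 2 * ν ^ 2 := add_le_add habsA habsB
      _ = L * ν ^ 2 := by ring
  have h2 : L * ν ^ 2 < 2 * ν * |c| := by
    have := (mul_lt_mul_iff_right₀ (show (0:ℝ) < 2 * ν by linarith)).mpr hbig
    calc L * ν ^ 2 = 2 * ν * (L * ν / 2) := by ring
      _ < 2 * ν * |c| := this
  have hD := abs_le.mp key
  rcases lt_trichotomy c 0 with hcn | hc0 | hcp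
  · have : f (x + ν • u) - f (x - ν • u) < 0 := by
      have hac : |c| = -c := abs_of_neg hcn
      rw [hac] at h2
      nlinarith [hD.2]
    rw [Real.sign_of_neg this, Real.sign_of_neg hcn]
  · exfalso; rw [hc0] at hbig; simp at hbig; nlinarith
  · have : 0 < f (x + ν • u) - f (x - ν • u) := by
      have hac : |c| = c := abs_of_pos hcp
      rw [hac] at h2
      nlinarith [hD.1]
    rw [Real.sign_of_pos this, Real.sign_of_pos hcp]
end
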